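/- The orbit of e_0 under the Weyl group W_6 consists exactly of the following classes: e_0; 2e_0 − e_i − e_j − e_k for distinct 1 ≤ i < j < k ≤ 6; 3e_0 − 2e_i − e_j − e_k − e_l − e_m for five distinct indices i, j, k, l, m in {1, …, 6}; 4e_0 − 2e_i − 2e_j − 2e_k − e_l − e_m − e_n where {i, j, k, l, m, n} = {1, …, 6}; and 5e_0 − 2e_1 − 2e_2 − 2e_3 − 2e_4 − 2e_5 − 2e_6. -/

import Mathlib

set_option maxHeartbeats 4000000
set_option maxRecDepth 100000


/-- The intersection form on the divisor class lattice `L = Fin 7 → ℤ`: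
`⟨x, y⟩ = x₀y₀ − x₁y₁ − ⋯ − x₆y₆`. -/
def form (x y : Fin 7 → ℤ) : ℤ :=
  x 0 * y 0 - x 1 * y 1 - x 2 * y 2 - x 3 * y 3 - x 4 * y 4 - x 5 * y 5 - x 6 * y 6

/-- The standard basis vectors `e 0, …, e 6` of `L`. -/
def e (i : Fin 7) : Fin 7 → ℤ := fun j => if j = i then 1 else 0

/-- The anticanonical class `κ = 3e₀ − e₁ − ⋯ − e₆`. -/
def kappa : Fin 7 → ℤ := (3 : ℤ) • e 0 - e 1 - e 2 - e 3 - e 4 - e 5 - e 6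

/-- The simple roots `r₀ = e₀ − e₁ − e₂ − e₃` and `rᵢ = eᵢ − e_{i+1}` for `1 ≤ i ≤ 5`. -/
def r : Fin 6 → (Fin 7 → ℤ) :=
  ![e 0 - e 1 - e 2 - e 3, e 1 - e 2, e 2 - e 3, e 3 - e 4, e 4 - e 5, e 5 - e 6]

lemma form_add_left (x y v : Fin 7 → ℤ) : form (x + y) v = form x v + form y v := by
  simp only [form, Pi.add_apply]; ring

lemma form_smul_left (c : ℤ) (x v : Fin 7 → ℤ) : form (c • x) v = c * form x v := by
  simp only [form, Pi.smul_apply, smul_eq_mul]; ring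

/-- The reflection `x ↦ x + ⟨x, v⟩·v` as a ℤ-linear map. -/
def reflMap (v : Fin 7 → ℤ) : (Fin 7 → ℤ) →ₗ[ℤ] (Fin 7 → ℤ) where
  toFun x := x + form x v • v
  map_add' x y := by
    funext j
    simp only [form, Pi.add_apply, Pi.smul_apply, smul_eq_mul]
    ring
  map_smul' c x := by
    funext j
    simp only [form, Pi.add_apply, Pi.smul_apply, smul_eq_mul, RingHom.id_apply]
    ring

lemma reflMap_invol (v : Fin 7 → ℤ) (hv : form v v = -2) (x : Fin 7 → ℤ) :
    reflMap v (reflMap v x) = x := by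
  show (x + form x v • v) + form (x + form x v • v) v • v = x
  rw [form_add_left, form_smul_left, hv]
  module

/-- The reflection `sᵢ(x) = x + ⟨x, rᵢ⟩·rᵢ` through the simple root `rᵢ`,
as a ℤ-linear automorphism of `L`. -/
def s (i : Fin 6) : (Fin 7 → ℤ) ≃ₗ[ℤ] (Fin 7 → ℤ) :=
  LinearEquiv.ofLinear (reflMap (r i)) (reflMap (r i))
    (LinearMap.ext fun x => reflMap_invol (r i) (by fin_cases i <;> decide) x)
    (LinearMap.ext fun x => reflMap_invol (r i) (by fin_cases i <;> decide) x)

/-- The Weyl group `W₆`: the subgroup of the group of ℤ-linear automorphisms of `L`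
generated by the reflections `s₀, …, s₅`. -/
def W6 : Subgroup ((Fin 7 → ℤ) ≃ₗ[ℤ] (Fin 7 → ℤ)) :=
  Subgroup.closure (Set.range s)

/-- The sum `e₁ + e₂ + e₃ + e₄ + e₅ + e₆`. -/
def sumE : Fin 7 → ℤ := e 1 + e 2 + e 3 + e 4 + e 5 + e 6

def L72 : List (Fin 7 → ℤ) := [![1, 0, 0, 0, 0, 0, 0],
  ![2, -1, -1, -1, 0, 0, 0],
  ![2, -1, -1, 0, -1, 0, 0],
  ![2, -1, -1, 0, 0, -1, 0],
  ![2, -1, -1, 0, 0, 0, -1],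
  ![2, -1, 0, -1, -1, 0, 0],
  ![2, -1, 0, -1, 0, -1, 0],
  ![2, -1, 0, -1, 0, 0, -1],
  ![2, -1, 0, 0, -1, -1, 0],
  ![2, -1, 0, 0, -1, 0, -1],
  ![2, -1, 0, 0, 0, -1, -1],
  ![2, 0, -1, -1, -1, 0, 0],
  ![2, 0, -1, -1, 0, -1, 0],
  ![2, 0, -1, -1, 0, 0, -1],
  ![2, 0, -1, 0, -1, -1, 0],
  ![2, 0, -1, 0, -1, 0, -1],
  ![2, 0, -1, 0, 0, -1, -1],
  ![2, 0, 0, -1, -1, -1, 0],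
  ![2, 0, 0, -1, -1, 0, -1],
  ![2, 0, 0, -1, 0, -1, -1],
  ![2, 0, 0, 0, -1, -1, -1],
  ![3, -2, -1, -1, -1, -1, 0],
  ![3, -2, -1, -1, -1, 0, -1],
  ![3, -2, -1, -1, 0, -1, -1],
  ![3, -2, -1, 0, -1, -1, -1],
  ![3, -2, 0, -1, -1, -1, -1],
  ![3, -1, -2, -1, -1, -1, 0],
  ![3, -1, -2, -1, -1, 0, -1],
  ![3, -1, -2, -1, 0, -1, -1],
  ![3, -1, -2, 0, -1, -1, -1],
  ![3, -1, -1, -2, -1, -1, 0],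
  ![3, -1, -1, -2, -1, 0, -1],
  ![3, -1, -1, -2, 0, -1, -1],
  ![3, -1, -1, -1, -2, -1, 0],
  ![3, -1, -1, -1, -2, 0, -1],
  ![3, -1, -1, -1, -1, -2, 0],
  ![3, -1, -1, -1, -1, 0, -2],
  ![3, -1, -1, -1, 0, -2, -1],
  ![3, -1, -1, -1, 0, -1, -2],
  ![3, -1, -1, 0, -2, -1, -1],
  ![3, -1, -1, 0, -1, -2, -1],
  ![3, -1, -1, 0, -1, -1, -2],
  ![3, -1, 0, -2, -1, -1, -1],
  ![3, -1, 0, -1, -2, -1, -1],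
  ![3, -1, 0, -1, -1, -2, -1],
  ![3, -1, 0, -1, -1, -1, -2],
  ![3, 0, -2, -1, -1, -1, -1],
  ![3, 0, -1, -2, -1, -1, -1],
  ![3, 0, -1, -1, -2, -1, -1],
  ![3, 0, -1, -1, -1, -2, -1],
  ![3, 0, -1, -1, -1, -1, -2],
  ![4, -2, -2, -2, -1, -1, -1],
  ![4, -2, -2, -1, -2, -1, -1],
  ![4, -2, -2, -1, -1, -2, -1],
  ![4, -2, -2, -1, -1, -1, -2],
  ![4, -2, -1, -2, -2, -1, -1],
  ![4, -2, -1, -2, -1, -2, -1],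
  ![4, -2, -1, -2, -1, -1, -2],
  ![4, -2, -1, -1, -2, -2, -1],
  ![4, -2, -1, -1, -2, -1, -2],
  ![4, -2, -1, -1, -1, -2, -2],
  ![4, -1, -2, -2, -2, -1, -1],
  ![4, -1, -2, -2, -1, -2, -1],
  ![4, -1, -2, -2, -1, -1, -2],
  ![4, -1, -2, -1, -2, -2, -1],
  ![4, -1, -2, -1, -2, -1, -2],
  ![4, -1, -2, -1, -1, -2, -2],
  ![4, -1, -1, -2, -2, -2, -1],
  ![4, -1, -1, -2, -2, -1, -2],
  ![4, -1, -1, -2, -1, -2, -2],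
  ![4, -1, -1, -1, -2, -2, -2],
  ![5, -2, -2, -2, -2, -2, -2]]

def pairs : List (List (Fin 6) × (Fin 7 → ℤ)) := [([], ![1, 0, 0, 0, 0, 0, 0]),
  ([0], ![2, -1, -1, -1, 0, 0, 0]),
  ([3, 0], ![2, -1, -1, 0, -1, 0, 0]),
  ([4, 3, 0], ![2, -1, -1, 0, 0, -1, 0]),
  ([5, 4, 3, 0], ![2, -1, -1, 0, 0, 0, -1]),
  ([2, 3, 0], ![2, -1, 0, -1, -1, 0, 0]),
  ([4, 2, 3, 0], ![2, -1, 0, -1, 0, -1, 0]),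
  ([5, 4, 2, 3, 0], ![2, -1, 0, -1, 0, 0, -1]),
  ([3, 4, 2, 3, 0], ![2, -1, 0, 0, -1, -1, 0]),
  ([5, 3, 4, 2, 3, 0], ![2, -1, 0, 0, -1, 0, -1]),
  ([4, 5, 3, 4, 2, 3, 0], ![2, -1, 0, 0, 0, -1, -1]),
  ([1, 2, 3, 0], ![2, 0, -1, -1, -1, 0, 0]),
  ([4, 1, 2, 3, 0], ![2, 0, -1, -1, 0, -1, 0]),
  ([5, 4, 1, 2, 3, 0], ![2, 0, -1, -1, 0, 0, -1]),
  ([3, 4, 1, 2, 3, 0], ![2, 0, -1, 0, -1, -1, 0]),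
  ([5, 3, 4, 1, 2, 3, 0], ![2, 0, -1, 0, -1, 0, -1]),
  ([4, 5, 3, 4, 1, 2, 3, 0], ![2, 0, -1, 0, 0, -1, -1]),
  ([2, 3, 4, 1, 2, 3, 0], ![2, 0, 0, -1, -1, -1, 0]),
  ([5, 2, 3, 4, 1, 2, 3, 0], ![2, 0, 0, -1, -1, 0, -1]),
  ([4, 5, 2, 3, 4, 1, 2, 3, 0], ![2, 0, 0, -1, 0, -1, -1]),
  ([3, 4, 5, 2, 3, 4, 1, 2, 3, 0], ![2, 0, 0, 0, -1, -1, -1]),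
  ([0, 3, 4, 2, 3, 0], ![3, -2, -1, -1, -1, -1, 0]),
  ([5, 0, 3, 4, 2, 3, 0], ![3, -2, -1, -1, -1, 0, -1]),
  ([4, 5, 0, 3, 4, 2, 3, 0], ![3, -2, -1, -1, 0, -1, -1]),
  ([3, 4, 5, 0, 3, 4, 2, 3, 0], ![3, -2, -1, 0, -1, -1, -1]),
  ([2, 3, 4, 5, 0, 3, 4, 2, 3, 0], ![3, -2, 0, -1, -1, -1, -1]),
  ([0, 3, 4, 1, 2, 3, 0], ![3, -1, -2, -1, -1, -1, 0]),
  ([5, 0, 3, 4, 1, 2, 3, 0], ![3, -1, -2, -1, -1, 0, -1]),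
  ([4, 5, 0, 3, 4, 1, 2, 3, 0], ![3, -1, -2, -1, 0, -1, -1]),
  ([3, 4, 5, 0, 3, 4, 1, 2, 3, 0], ![3, -1, -2, 0, -1, -1, -1]),
  ([2, 0, 3, 4, 1, 2, 3, 0], ![3, -1, -1, -2, -1, -1, 0]),
  ([5, 2, 0, 3, 4, 1, 2, 3, 0], ![3, -1, -1, -2, -1, 0, -1]),
  ([4, 5, 2, 0, 3, 4, 1, 2, 3, 0], ![3, -1, -1, -2, 0, -1, -1]),
  ([3, 2, 0, 3, 4, 1, 2, 3, 0], ![3, -1, -1, -1, -2, -1, 0]),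
  ([5, 3, 2, 0, 3, 4, 1, 2, 3, 0], ![3, -1, -1, -1, -2, 0, -1]),
  ([4, 3, 2, 0, 3, 4, 1, 2, 3, 0], ![3, -1, -1, -1, -1, -2, 0]),
  ([5, 4, 3, 2, 0, 3, 4, 1, 2, 3, 0], ![3, -1, -1, -1, -1, 0, -2]),
  ([4, 5, 3, 2, 0, 3, 4, 1, 2, 3, 0], ![3, -1, -1, -1, 0, -2, -1]),
  ([4, 5, 4, 3, 2, 0, 3, 4, 1, 2, 3, 0], ![3, -1, -1, -1, 0, -1, -2]),
  ([3, 4, 5, 2, 0, 3, 4, 1, 2, 3, 0], ![3, -1, -1, 0, -2, -1, -1]),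
  ([3, 4, 5, 3, 2, 0, 3, 4, 1, 2, 3, 0], ![3, -1, -1, 0, -1, -2, -1]),
  ([3, 4, 5, 4, 3, 2, 0, 3, 4, 1, 2, 3, 0], ![3, -1, -1, 0, -1, -1, -2]),
  ([2, 3, 4, 5, 0, 3, 4, 1, 2, 3, 0], ![3, -1, 0, -2, -1, -1, -1]),
  ([2, 3, 4, 5, 2, 0, 3, 4, 1, 2, 3, 0], ![3, -1, 0, -1, -2, -1, -1]),
  ([2, 3, 4, 5, 3, 2, 0, 3, 4, 1, 2, 3, 0], ![3, -1, 0, -1, -1, -2, -1]),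
  ([2, 3, 4, 5, 4, 3, 2, 0, 3, 4, 1, 2, 3, 0], ![3, -1, 0, -1, -1, -1, -2]),
  ([1, 2, 3, 4, 5, 0, 3, 4, 2, 3, 0], ![3, 0, -2, -1, -1, -1, -1]),
  ([1, 2, 3, 4, 5, 0, 3, 4, 1, 2, 3, 0], ![3, 0, -1, -2, -1, -1, -1]),
  ([1, 2, 3, 4, 5, 2, 0, 3, 4, 1, 2, 3, 0], ![3, 0, -1, -1, -2, -1, -1]),
  ([1, 2, 3, 4, 5, 3, 2, 0, 3, 4, 1, 2, 3, 0], ![3, 0, -1, -1, -1, -2, -1]),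
  ([1, 2, 3, 4, 5, 4, 3, 2, 0, 3, 4, 1, 2, 3, 0], ![3, 0, -1, -1, -1, -1, -2]),
  ([0, 3, 4, 5, 2, 3, 4, 1, 2, 3, 0], ![4, -2, -2, -2, -1, -1, -1]),
  ([0, 3, 4, 5, 2, 0, 3, 4, 1, 2, 3, 0], ![4, -2, -2, -1, -2, -1, -1]),
  ([0, 3, 4, 5, 3, 2, 0, 3, 4, 1, 2, 3, 0], ![4, -2, -2, -1, -1, -2, -1]),
  ([0, 3, 4, 5, 4, 3, 2, 0, 3, 4, 1, 2, 3, 0], ![4, -2, -2, -1, -1, -1, -2]),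
  ([2, 0, 3, 4, 5, 2, 0, 3, 4, 1, 2, 3, 0], ![4, -2, -1, -2, -2, -1, -1]),
  ([2, 0, 3, 4, 5, 3, 2, 0, 3, 4, 1, 2, 3, 0], ![4, -2, -1, -2, -1, -2, -1]),
  ([2, 0, 3, 4, 5, 4, 3, 2, 0, 3, 4, 1, 2, 3, 0], ![4, -2, -1, -2, -1, -1, -2]),
  ([3, 2, 0, 3, 4, 5, 3, 2, 0, 3, 4, 1, 2, 3, 0], ![4, -2, -1, -1, -2, -2, -1]),
  ([3, 2, 0, 3, 4, 5, 4, 3, 2, 0, 3, 4, 1, 2, 3, 0], ![4, -2, -1, -1, -2, -1, -2]),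
  ([4, 3, 2, 0, 3, 4, 5, 4, 3, 2, 0, 3, 4, 1, 2, 3, 0], ![4, -2, -1, -1, -1, -2, -2]),
  ([1, 2, 0, 3, 4, 5, 2, 0, 3, 4, 1, 2, 3, 0], ![4, -1, -2, -2, -2, -1, -1]),
  ([1, 2, 0, 3, 4, 5, 3, 2, 0, 3, 4, 1, 2, 3, 0], ![4, -1, -2, -2, -1, -2, -1]),
  ([1, 2, 0, 3, 4, 5, 4, 3, 2, 0, 3, 4, 1, 2, 3, 0], ![4, -1, -2, -2, -1, -1, -2]),
  ([3, 1, 2, 0, 3, 4, 5, 3, 2, 0, 3, 4, 1, 2, 3, 0], ![4, -1, -2, -1, -2, -2, -1]),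
  ([3, 1, 2, 0, 3, 4, 5, 4, 3, 2, 0, 3, 4, 1, 2, 3, 0], ![4, -1, -2, -1, -2, -1, -2]),
  ([4, 3, 1, 2, 0, 3, 4, 5, 4, 3, 2, 0, 3, 4, 1, 2, 3, 0], ![4, -1, -2, -1, -1, -2, -2]),
  ([2, 3, 1, 2, 0, 3, 4, 5, 3, 2, 0, 3, 4, 1, 2, 3, 0], ![4, -1, -1, -2, -2, -2, -1]),
  ([2, 3, 1, 2, 0, 3, 4, 5, 4, 3, 2, 0, 3, 4, 1, 2, 3, 0], ![4, -1, -1, -2, -2, -1, -2]),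
  ([4, 2, 3, 1, 2, 0, 3, 4, 5, 4, 3, 2, 0, 3, 4, 1, 2, 3, 0], ![4, -1, -1, -2, -1, -2, -2]),
  ([3, 4, 2, 3, 1, 2, 0, 3, 4, 5, 4, 3, 2, 0, 3, 4, 1, 2, 3, 0], ![4, -1, -1, -1, -2, -2, -2]),
  ([0, 3, 4, 2, 3, 1, 2, 0, 3, 4, 5, 4, 3, 2, 0, 3, 4, 1, 2, 3, 0], ![5, -2, -2, -2, -2, -2, -2])]

def myRefl (i : Fin 6) (x : Fin 7 → ℤ) : Fin 7 → ℤ :=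
  fun j => x j + form x (r i) * r i j

lemma reflMap_eq (i : Fin 6) (x : Fin 7 → ℤ) : reflMap (r i) x = myRefl i x := rfl

lemma s_apply (i : Fin 6) (x : Fin 7 → ℤ) : s i x = myRefl i x := rfl

def applyR : List (Fin 6) → (Fin 7 → ℤ) → (Fin 7 → ℤ)
  | [], x => x
  | i :: l, x => myRefl i (applyR l x)

lemma applyR_prod_apply (l : List (Fin 6)) (x : Fin 7 → ℤ) :
    ((l.map s).prod : (Fin 7 → ℤ) ≃ₗ[ℤ] (Fin 7 → ℤ)) x = applyR l x := by
  induction l with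
  | nil => rfl
  | cons i l ih =>
    simp only [List.map_cons, List.prod_cons, applyR]
    show s i ((List.map s l).prod x) = myRefl i (applyR l x)
    rw [ih, s_apply]

lemma prodMemW6 (l : List (Fin 6)) : (l.map s).prod ∈ W6 := by
  apply Subgroup.list_prod_mem
  intro a ha
  simp only [List.mem_map] at ha
  obtain ⟨i, _, rfl⟩ := ha
  exact Subgroup.subset_closure ⟨i, rfl⟩

lemma pairs_correct : ∀ p ∈ pairs, applyR p.1 (e 0) = p.2 := by decide

lemma pairs_snd : pairs.map Prod.snd = L72 := by decide

lemma gen_stable : ∀ i : Fin 6, ∀ x ∈ L72, myRefl i x ∈ L72 := by decide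

lemma e0_mem : e 0 ∈ L72 := by decide

lemma L72_to_rhs : ∀ x ∈ L72,
      (x = e 0 ∨
       (∃ i j k : Fin 7, 0 < i ∧ i < j ∧ j < k ∧
          x = (2 : ℤ) • e 0 - e i - e j - e k) ∨
       (∃ i n : Fin 7, 0 < i ∧ 0 < n ∧ i ≠ n ∧
          x = (3 : ℤ) • e 0 - sumE - e i + e n) ∨
       (∃ i j k : Fin 7, 0 < i ∧ i < j ∧ j < k ∧
          x = (4 : ℤ) • e 0 - sumE - e i - e j - e k) ∨
       x = (5 : ℤ) • e 0 - (2 : ℤ) • sumE) := by decide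

lemma rhs2 : ∀ i j k : Fin 7, 0 < i → i < j → j < k →
    ((2 : ℤ) • e 0 - e i - e j - e k) ∈ L72 := by decide

lemma rhs3 : ∀ i n : Fin 7, 0 < i → 0 < n → i ≠ n →
    ((3 : ℤ) • e 0 - sumE - e i + e n) ∈ L72 := by decide

lemma rhs4 : ∀ i j k : Fin 7, 0 < i → i < j → j < k →
    ((4 : ℤ) • e 0 - sumE - e i - e j - e k) ∈ L72 := by decide

lemma rhs5 : ((5 : ℤ) • e 0 - (2 : ℤ) • sumE) ∈ L72 := by decide

lemma stable (w : (Fin 7 → ℤ) ≃ₗ[ℤ] (Fin 7 → ℤ)) (hw : w ∈ W6) :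
    ∀ x ∈ L72, w x ∈ L72 := by
  have key : ∀ w : (Fin 7 → ℤ) ≃ₗ[ℤ] (Fin 7 → ℤ),
      (∀ x ∈ L72, w x ∈ L72) → ∀ x ∈ L72, w⁻¹ x ∈ L72 := by
    intro w h x hx
    classical
    set F : Finset (Fin 7 → ℤ) := L72.toFinset with hF
    have himg : F.image (fun y => w y) = F := by
      apply Finset.eq_of_subset_of_card_le
      · intro z hz
        simp only [Finset.mem_image] at hz
        obtain ⟨y, hy, rfl⟩ := hz
        simpa [hF, List.mem_toFinset] using h y (by simpa [hF, List.mem_toFinset] using hy)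
      · rw [Finset.card_image_of_injective _ w.injective]
    have hxF : x ∈ F := by simpa [hF, List.mem_toFinset] using hx
    rw [← himg] at hxF
    simp only [Finset.mem_image] at hxF
    obtain ⟨y, hy, hyx⟩ := hxF
    have : w⁻¹ x = y := by
      show w.symm x = y
      apply w.injective
      rw [w.apply_symm_apply, hyx]
    rw [this]
    simpa [hF, List.mem_toFinset] using hy
  induction hw using Subgroup.closure_induction with
  | mem g hg =>
    obtain ⟨i, rfl⟩ := hg
    intro x hx
    rw [s_apply]
    exact gen_stable i x hx
  | one => intro x hx; simpa using hx
  | mul g₁ g₂ _ _ h1 h2 =>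
    intro x hx
    have : (g₁ * g₂) x = g₁ (g₂ x) := rfl
    rw [this]
    exact h1 _ (h2 _ hx)
  | inv g _ h => exact key g h

/-- The `W₆`-orbit of `e₀`. -/
theorem statement_5 (x : Fin 7 → ℤ) :
    (∃ w ∈ W6, w (e 0) = x) ↔
      (x = e 0 ∨
       (∃ i j k : Fin 7, 0 < i ∧ i < j ∧ j < k ∧
          x = (2 : ℤ) • e 0 - e i - e j - e k) ∨
       (∃ i n : Fin 7, 0 < i ∧ 0 < n ∧ i ≠ n ∧
          x = (3 : ℤ) • e 0 - sumE - e i + e n) ∨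
       (∃ i j k : Fin 7, 0 < i ∧ i < j ∧ j < k ∧
          x = (4 : ℤ) • e 0 - sumE - e i - e j - e k) ∨
       x = (5 : ℤ) • e 0 - (2 : ℤ) • sumE) := by
  constructor
  · rintro ⟨w, hw, rfl⟩
    exact L72_to_rhs _ (stable w hw _ e0_mem)
  · intro h
    have hx : x ∈ L72 := by
      rcases h with rfl | ⟨i,j,k,h1,h2,h3,rfl⟩ | ⟨i,n,h1,h2,h3,rfl⟩ | ⟨i,j,k,h1,h2,h3,rfl⟩ | rfl
      · exact e0_mem
      · exact rhs2 i j k h1 h2 h3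
      · exact rhs3 i n h1 h2 h3
      · exact rhs4 i j k h1 h2 h3
      · exact rhs5
    rw [← pairs_snd] at hx
    simp only [List.mem_map] at hx
    obtain ⟨p, hp, rfl⟩ := hx
    exact ⟨(p.1.map s).prod, prodMemW6 p.1, (applyR_prod_apply p.1 (e 0)).trans (pairs_correct p hp)⟩
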